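/- Let σ > 0 and c ∈ (0,1). Let T : ℕ → ℝ satisfy T(n) → ∞ and (log T(n))/n → 0 as n → ∞. Define aₙ² = c·σ²·√((log T(n))/(2n)). Then T(n) · (cosh(2aₙ²/σ²))^{−n} → ∞ as n → ∞. -/

import Mathlib

open Filter Real

/-- If `σ > 0`, `c ∈ (0,1)`, `T n → ∞`, `log (T n) / n → 0`, and
`aₙ² = c σ² √(log (T n) / (2n))`, then `T n * (cosh (2 aₙ²/σ²))^(-n) → ∞`. -/
theorem stmt_12 (σ c : ℝ) (hσ : 0 < σ) (hc0 : 0 < c) (hc1 : c < 1)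
    (T : ℕ → ℝ) (hT : Tendsto T atTop atTop)
    (hlog : Tendsto (fun n => Real.log (T n) / n) atTop (nhds 0)) :
    Tendsto (fun n =>
      T n * Real.cosh (2 * (c * σ ^ 2 * Real.sqrt (Real.log (T n) / (2 * n))) / σ ^ 2)
        ^ (-(n : ℝ)))
      atTop atTop := by
  have hpow : Tendsto (fun n => T n ^ (1 - c ^ 2)) atTop atTop :=
    (tendsto_rpow_atTop (by nlinarith)).comp hT
  refine tendsto_atTop_mono' atTop ?_ hpow
  filter_upwards [hT.eventually_ge_atTop 1, Filter.eventually_ge_atTop 1] with n hT1 hn1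
  have hTpos : (0:ℝ) < T n := lt_of_lt_of_le one_pos hT1
  have hL : (0:ℝ) ≤ Real.log (T n) := Real.log_nonneg hT1
  have hnpos : (0:ℝ) < n := by exact_mod_cast hn1
  set y : ℝ := 2 * (c * σ ^ 2 * Real.sqrt (Real.log (T n) / (2 * n))) / σ ^ 2 with hy
  have hy' : y = 2 * c * Real.sqrt (Real.log (T n) / (2 * n)) := by
    rw [hy]; field_simp
  have hy2 : (n : ℝ) * (y ^ 2 / 2) = c ^ 2 * Real.log (T n) := by
    rw [hy', mul_pow, mul_pow, Real.sq_sqrt (by positivity)]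
    field_simp
  have hcosh : Real.cosh y ≤ Real.exp (y ^ 2 / 2) := Real.cosh_le_exp_half_sq y
  have h1 : Real.exp (y ^ 2 / 2) ^ (-(n : ℝ)) ≤ Real.cosh y ^ (-(n : ℝ)) :=
    Real.rpow_le_rpow_of_nonpos (Real.cosh_pos y) hcosh (by simp [hnpos.le])
  have h2 : Real.exp (y ^ 2 / 2) ^ (-(n : ℝ)) = T n ^ (-(c ^ 2)) := by
    rw [← Real.exp_log hTpos, ← Real.exp_mul, ← Real.exp_mul]
    congr 1
    nlinarith [hy2]
  calc T n ^ (1 - c ^ 2) = T n * T n ^ (-(c ^ 2)) := by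
        rw [show (1 : ℝ) - c ^ 2 = 1 + -(c ^ 2) by ring,
          Real.rpow_add hTpos, Real.rpow_one]
    _ ≤ T n * Real.cosh y ^ (-(n : ℝ)) := by
        rw [← h2]; exact mul_le_mul_of_nonneg_left h1 hTpos.le
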